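/- Let n be a positive integer and let S = [[λ, μ], [conj(μ), conj(λ)]] be a complex 2n×2n matrix of block form which is complex symplectic (Sᵀ J S = J with J = [[0, I], [−I, 0]]). Then λ is invertible, the matrices λ⁻¹μ and conj(μ)λ⁻¹ are both symmetric, and I − (conj(μ)λ⁻¹)ᴴ(conj(μ)λ⁻¹) is positive definite; in particular the operator norm satisfies ‖conj(μ)λ⁻¹‖ < 1. -/

import Mathlib

open Matrix
open scoped Matrix.Norms.L2Operator ComplexOrder


noncomputable local instance matrixCStarAlgebra (n : ℕ) :
    CStarAlgebra (Matrix (Fin n) (Fin n) ℂ) := Matrix.instCStarAlgebra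

private lemma posDef_conjTranspose_mul_self_of_isUnit {n : ℕ} {B : Matrix (Fin n) (Fin n) ℂ}
    (hB : IsUnit B) : (Bᴴ * B).PosDef := by
  refine posDef_iff_dotProduct_mulVec.mpr ⟨isHermitian_conjTranspose_mul_self _, fun x hx => ?_⟩
  rw [← mulVec_mulVec, dotProduct_mulVec, vecMul_conjTranspose, star_star]
  refine Matrix.dotProduct_star_self_pos_iff.mpr ?_
  intro h
  exact hx <| (Matrix.mulVec_injective_iff_isUnit.mpr hB) (by simpa using h)

/-- If `S = [[λ, μ], [conj μ, conj λ]]` is complex symplectic, then `λ` is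
invertible, `λ⁻¹μ` and `conj(μ)λ⁻¹` are symmetric, `I − (conj(μ)λ⁻¹)ᴴ(conj(μ)λ⁻¹)` is
positive definite, and the (L2) operator norm `‖conj(μ)λ⁻¹‖ < 1`. -/
theorem symplectic_squeezing_matrix_properties (n : ℕ) (hn : 0 < n)
    (lam mu : Matrix (Fin n) (Fin n) ℂ)
    (hS : (fromBlocks lam mu (mu.map (starRingEnd ℂ)) (lam.map (starRingEnd ℂ)))ᵀ *
        fromBlocks (0 : Matrix (Fin n) (Fin n) ℂ) (1 : Matrix (Fin n) (Fin n) ℂ)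
          (-1 : Matrix (Fin n) (Fin n) ℂ) (0 : Matrix (Fin n) (Fin n) ℂ) *
        fromBlocks lam mu (mu.map (starRingEnd ℂ)) (lam.map (starRingEnd ℂ)) =
      fromBlocks (0 : Matrix (Fin n) (Fin n) ℂ) (1 : Matrix (Fin n) (Fin n) ℂ)
        (-1 : Matrix (Fin n) (Fin n) ℂ) (0 : Matrix (Fin n) (Fin n) ℂ)) :
    IsUnit lam ∧
    (lam⁻¹ * mu)ᵀ = lam⁻¹ * mu ∧
    (mu.map (starRingEnd ℂ) * lam⁻¹)ᵀ = mu.map (starRingEnd ℂ) * lam⁻¹ ∧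
    (1 - (mu.map (starRingEnd ℂ) * lam⁻¹)ᴴ * (mu.map (starRingEnd ℂ) * lam⁻¹)).PosDef ∧
    ‖mu.map (starRingEnd ℂ) * lam⁻¹‖ < 1 := by
  haveI : NeZero n := ⟨hn.ne'⟩
  set c := starRingEnd ℂ
  set Cm := mu.map c with hCm
  set Dm := lam.map c with hDm
  -- basic conj-transpose identities
  have hCmH : Cmᴴ = muᵀ := by
    ext i j; simp [hCm, conjTranspose_apply]
  have hDmT : Dmᵀ = lamᴴ := by
    ext i j; simp [hDm, conjTranspose_apply]; rfl
  -- keep a copy of hS for later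
  have hS' := hS
  rw [fromBlocks_transpose, fromBlocks_multiply, fromBlocks_multiply] at hS
  simp only [Matrix.mul_zero, Matrix.zero_mul, Matrix.mul_one, Matrix.one_mul,
    Matrix.mul_neg, Matrix.neg_mul, add_zero, zero_add] at hS
  obtain ⟨h11, h12, -, -⟩ := fromBlocks_inj.mp hS
  rw [neg_add_eq_sub, sub_eq_zero] at h11
  rw [neg_add_eq_sub] at h12
  -- h11 : lamᵀ * Cm = Cmᵀ * lam
  -- h12 : lamᵀ * Dm - Cmᵀ * mu = 1
  have key : lamᴴ * lam - muᵀ * Cm = 1 := by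
    have := congrArg Matrix.transpose h12
    rwa [transpose_sub, transpose_mul, transpose_mul, transpose_transpose,
      transpose_transpose, transpose_one, hDmT] at this
  -- lam is invertible
  have hPDl : (lamᴴ * lam).PosDef := by
    have : lamᴴ * lam = 1 + Cmᴴ * Cm := by
      rw [hCmH, ← key, sub_add_cancel]
    rw [this]
    exact Matrix.PosDef.add_posSemidef Matrix.PosDef.one (posSemidef_conjTranspose_mul_self Cm)
  have hu : IsUnit lam := by
    have hdet : IsUnit (lamᴴ.det * lam.det) := by
      rw [← det_mul]; exact (Matrix.isUnit_iff_isUnit_det _).mp hPDl.isUnit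
    exact (Matrix.isUnit_iff_isUnit_det _).mpr (isUnit_of_mul_isUnit_right hdet)
  have hudet : IsUnit lam.det := (Matrix.isUnit_iff_isUnit_det _).mp hu
  have hlaminv : lam * lam⁻¹ = 1 := Matrix.mul_nonsing_inv lam hudet
  have hinvlam : lam⁻¹ * lam = 1 := Matrix.nonsing_inv_mul lam hudet
  have hudetT : IsUnit lamᵀ.det := by rwa [det_transpose]
  -- symmetry of Cm * lam⁻¹
  have hsym2 : (Cm * lam⁻¹)ᵀ = Cm * lam⁻¹ := by
    have h1 : Cmᵀ = lamᵀ * (Cm * lam⁻¹) := by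
      rw [← Matrix.mul_assoc, h11, Matrix.mul_assoc, hlaminv, Matrix.mul_one]
    rw [transpose_mul, transpose_nonsing_inv, h1, ← Matrix.mul_assoc,
      Matrix.nonsing_inv_mul lamᵀ hudetT, Matrix.one_mul]
  -- S J Sᵀ = J to get lam * muᵀ = mu * lamᵀ
  set S := fromBlocks lam mu Cm Dm with hSdef
  set Jm : Matrix (Fin n ⊕ Fin n) (Fin n ⊕ Fin n) ℂ := fromBlocks 0 1 (-1) 0 with hJdef
  have hJ2 : Jm * Jm = -1 := by
    rw [hJdef, fromBlocks_multiply]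
    simp [← Matrix.fromBlocks_one, fromBlocks_neg]
  have hJu : Jm * (-Jm) = 1 := by rw [mul_neg, hJ2, neg_neg]
  have hJdetu : IsUnit Jm.det := by
    apply IsUnit.of_mul_eq_one (-Jm).det
    rw [← det_mul, hJu, det_one]
  have hSu : IsUnit S.det := by
    have hd := congrArg Matrix.det hS'
    rw [det_mul, det_mul, det_transpose] at hd
    -- hd : S.det * Jm.det * S.det = Jm.det
    have h3 : S.det * S.det * Jm.det = 1 * Jm.det := by rw [one_mul]; ring_nf; ring_nf at hd; exact hd
    exact IsUnit.of_mul_eq_one _ (mul_right_cancel₀ hJdetu.ne_zero h3)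
  have hSJS : S * Jm * Sᵀ = Jm := by
    have hST : Sᵀ = Jm * S⁻¹ * Jm⁻¹ := by
      have h1 : Sᵀ * Jm * S * S⁻¹ = Jm * S⁻¹ := by rw [hS']
      rw [Matrix.mul_assoc, Matrix.mul_nonsing_inv _ hSu, Matrix.mul_one] at h1
      have h2 : Sᵀ * (Jm * Jm⁻¹) = Jm * S⁻¹ * Jm⁻¹ := by
        rw [← Matrix.mul_assoc, h1]
      rwa [Matrix.mul_nonsing_inv _ hJdetu, Matrix.mul_one] at h2
    have hJinv : Jm⁻¹ = -Jm := Matrix.inv_eq_right_inv hJu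
    rw [hST, hJinv]
    calc S * Jm * (Jm * S⁻¹ * -Jm) = -(S * (Jm * Jm) * S⁻¹ * Jm) := by
          simp only [Matrix.mul_neg, Matrix.mul_assoc, Matrix.neg_mul]
      _ = S * S⁻¹ * Jm := by rw [hJ2]; simp [Matrix.mul_assoc]
      _ = Jm := by rw [Matrix.mul_nonsing_inv _ hSu, Matrix.one_mul]
  rw [hSdef, hJdef, fromBlocks_transpose, fromBlocks_multiply, fromBlocks_multiply] at hSJS
  simp only [Matrix.mul_zero, Matrix.zero_mul, Matrix.mul_one, Matrix.one_mul,
    Matrix.mul_neg, Matrix.neg_mul, add_zero, zero_add] at hSJS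
  obtain ⟨g11, -, -, -⟩ := fromBlocks_inj.mp hSJS
  -- g11 : -(mu * lamᵀ) + lam * muᵀ = 0
  rw [neg_add_eq_sub, sub_eq_zero] at g11
  -- g11 : lam * muᵀ = mu * lamᵀ
  have hsym1 : (lam⁻¹ * mu)ᵀ = lam⁻¹ * mu := by
    have h1 : mu = lam * (muᵀ * lamᵀ⁻¹) := by
      rw [← Matrix.mul_assoc, g11, Matrix.mul_assoc,
        Matrix.mul_nonsing_inv lamᵀ hudetT, Matrix.mul_one]
    rw [transpose_mul, transpose_nonsing_inv]
    conv_rhs => rw [h1, ← Matrix.mul_assoc, hinvlam, Matrix.one_mul]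
  -- positive definiteness
  have hIH : lam⁻¹ᴴ * lamᴴ = 1 := by rw [← conjTranspose_mul, hlaminv, conjTranspose_one]
  have hkey2 : 1 - (Cm * lam⁻¹)ᴴ * (Cm * lam⁻¹) = (lam⁻¹)ᴴ * lam⁻¹ := by
    have e1 : (1 : Matrix (Fin n) (Fin n) ℂ) = (lam⁻¹)ᴴ * (lamᴴ * lam) * lam⁻¹ := by
      calc (1 : Matrix (Fin n) (Fin n) ℂ) = (lam⁻¹ᴴ * lamᴴ) * (lam * lam⁻¹) := by
            rw [hIH, hlaminv, Matrix.one_mul]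
        _ = lam⁻¹ᴴ * (lamᴴ * lam) * lam⁻¹ := by
            simp only [Matrix.mul_assoc]
    have e2 : (Cm * lam⁻¹)ᴴ * (Cm * lam⁻¹) = lam⁻¹ᴴ * (muᵀ * Cm) * lam⁻¹ := by
      rw [conjTranspose_mul, hCmH]
      simp only [Matrix.mul_assoc]
    rw [e2]
    conv_lhs => rw [e1]
    rw [← Matrix.sub_mul, ← Matrix.mul_sub, key, Matrix.mul_one]
  have hinvu : IsUnit lam⁻¹ :=
    (Matrix.isUnit_iff_isUnit_det _).mpr (Matrix.isUnit_nonsing_inv_det lam hudet)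
  have hGpd : (1 - (Cm * lam⁻¹)ᴴ * (Cm * lam⁻¹)).PosDef := by
    rw [hkey2]; exact posDef_conjTranspose_mul_self_of_isUnit hinvu
  -- norm bound
  set T := Cm * lam⁻¹ with hT
  have hPsd : (Tᴴ * T).PosSemidef := posSemidef_conjTranspose_mul_self T
  have hH := hPsd.isHermitian
  have heig : ∀ i, hH.eigenvalues i < 1 := by
    intro i
    have hvne : ⇑(hH.eigenvectorBasis i) ≠ 0 := by
      intro h
      exact hH.eigenvectorBasis.orthonormal.ne_zero i (by ext x; exact congrFun h x)
    have hq := hGpd.dotProduct_mulVec_pos hvne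
    rw [sub_mulVec, one_mulVec, hH.mulVec_eigenvectorBasis, dotProduct_sub,
      dotProduct_smul] at hq
    have hvv : star ⇑(hH.eigenvectorBasis i) ⬝ᵥ ⇑(hH.eigenvectorBasis i) = 1 := by
      have h2 := orthonormal_iff_ite.mp hH.eigenvectorBasis.orthonormal i i
      rw [if_pos rfl, EuclideanSpace.inner_eq_star_dotProduct, dotProduct_comm] at h2
      exact h2
    rw [hvv] at hq
    have : (0 : ℂ) < 1 - (hH.eigenvalues i : ℂ) := by
      convert hq using 2
      simp [Complex.real_smul]
    have h3 : (hH.eigenvalues i : ℂ) < 1 := by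
      have := sub_pos.mp this
      exact this
    exact_mod_cast h3
  haveI : Nontrivial (Matrix (Fin n) (Fin n) ℂ) := by infer_instance
  have hsa : IsSelfAdjoint (Tᴴ * T) := hH
  have hspec := CStarAlgebra.norm_or_neg_norm_mem_spectrum (a := Tᴴ * T) hsa
  rw [Matrix.IsHermitian.spectrum_real_eq_range_eigenvalues hH] at hspec
  have hPlt : ‖Tᴴ * T‖ < 1 := by
    rcases hspec with h | h
    · obtain ⟨i, hi⟩ := h
      rw [← hi]; exact heig i
    · obtain ⟨i, hi⟩ := h
      have h0 := hPsd.eigenvalues_nonneg i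
      rw [hi] at h0
      linarith
  have hsq : ‖T‖ * ‖T‖ < 1 := by rwa [← Matrix.l2_opNorm_conjTranspose_mul_self T]
  have hTlt : ‖T‖ < 1 := by nlinarith [norm_nonneg T]
  exact ⟨hu, hsym1, hsym2, hGpd, hTlt⟩
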